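/- Let W = x_1^{a_1}x_2 + x_2^{a_2}x_3 + ⋯ + x_k^{a_k}x_1 be an invertible loop polynomial of weight 1 (each monomial has weighted degree 1) with weights q_1,…,q_k. If α = ∏_{i even} x_i^{a_i−1} dx_1⋯dx_k (the product over even indices i of x_i^{a_i−1}, times the top form), then wt(α) = k/2. In particular k must be even for such a G_W-invariant broad element to have μ^+ = μ^-. -/

import Mathlib

/-- Loop-type case of the lemma `μ⁺ = μ⁻` for invertible polynomials with the maximal
group: let `W = x₁^{a₁}x₂ + ⋯ + x_k^{a_k}x₁` be a loop polynomial of weight 1, i.e. the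
weights `qᵢ` satisfy `aᵢqᵢ + q_{i+1} = 1` (indices cyclic).  If `k` is even, then the
broad element `α = ∏_{i even} xᵢ^{aᵢ-1} · dx₁⋯dx_k` has weight
`wt(α) = ∑_{i even}(aᵢ - 1)qᵢ + ∑ᵢ qᵢ = k/2`. -/
theorem loop_broad_weight (k : ℕ) [NeZero k] (hke : Even k)
    (a : Fin k → ℕ) (q : Fin k → ℚ)
    (ha : ∀ i, 2 ≤ a i)
    (hq : ∀ i : Fin k, (a i : ℚ) * q i + q (i + 1) = 1) :
    (∑ i ∈ Finset.univ.filter (fun i : Fin k => Even (i : ℕ)), ((a i : ℚ) - 1) * q i) +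
        ∑ i, q i = (k : ℚ) / 2 := by
  classical
  have hkpos : 0 < k := Nat.pos_of_ne_zero (NeZero.ne k)
  have hk2 : 2 ≤ k := by
    rcases hke with ⟨m, hm⟩; omega
  have hone : ((1 : Fin k) : ℕ) = 1 := by
    rw [Fin.val_one']; exact Nat.mod_eq_of_lt hk2
  set E := Finset.univ.filter (fun i : Fin k => Even (i : ℕ)) with hE
  -- the successor map sends evens bijectively to odds
  have key : ∀ f : Fin k → ℚ, ∑ i ∈ E, f (i + 1) = ∑ j ∈ Eᶜ, f j := by
    intro f
    refine Finset.sum_nbij' (fun i => i + 1) (fun j => j - 1) ?_ ?_ ?_ ?_ ?_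
    · intro i hi
      have hiv : Even (i : ℕ) := by simpa [hE] using hi
      have hlt : (i : ℕ) + 1 < k := by
        rcases hke with ⟨m, hm⟩; rcases hiv with ⟨j, hj⟩
        have := i.isLt; omega
      have hval : ((i + 1 : Fin k) : ℕ) = (i : ℕ) + 1 := by
        simp only [Fin.add_def, hone]
        exact Nat.mod_eq_of_lt hlt
      simp only [hE, Finset.mem_compl, Finset.mem_filter, Finset.mem_univ, true_and, hval]
      rcases hiv with ⟨j, hj⟩
      rw [Nat.even_iff]; omega
    · intro j hj
      have hjv : ¬ Even (j : ℕ) := by simpa [hE] using hj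
      have hj0 : (j : ℕ) ≠ 0 := fun h => hjv (by simp [h])
      have hval : ((j - 1 : Fin k) : ℕ) = (j : ℕ) - 1 := by
        have h1 : ((j - 1 : Fin k) + 1 : Fin k) = j := sub_add_cancel j 1
        have h2 : (((j - 1 : Fin k) + 1 : Fin k) : ℕ) = (((j - 1 : Fin k) : ℕ) + 1) % k := by
          simp only [Fin.add_def, hone]
        have h3 : (((j - 1 : Fin k) : ℕ) + 1) % k = (j : ℕ) := by rw [← h2, h1]
        have h4 : ((j - 1 : Fin k) : ℕ) < k := (j - 1).isLt
        rcases Nat.lt_or_ge (((j - 1 : Fin k) : ℕ) + 1) k with h | h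
        · rw [Nat.mod_eq_of_lt h] at h3; omega
        · have : ((j - 1 : Fin k) : ℕ) + 1 = k := by omega
          rw [this, Nat.mod_self] at h3; omega
      simp only [hE, Finset.mem_filter, Finset.mem_univ, true_and, hval]
      rw [Nat.even_iff] at hjv ⊢; omega
    · intro i _; exact add_sub_cancel_right i 1
    · intro j _; exact sub_add_cancel j 1
    · intro i _; rfl
  -- cardinalities: #E = #Eᶜ, hence #E = k/2
  have hcard : (E.card : ℚ) = (k : ℚ) / 2 := by
    have h1 : ∑ _i ∈ E, (1 : ℚ) = ∑ _j ∈ Eᶜ, (1 : ℚ) := key (fun _ => 1)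
    simp only [Finset.sum_const, nsmul_eq_mul, mul_one] at h1
    have h2 : (E.card : ℚ) = (Eᶜ.card : ℚ) := h1
    have h3 : E.card + Eᶜ.card = k := by
      rw [Finset.card_add_card_compl]; simp
    have h4 : ((E.card : ℚ)) + (Eᶜ.card : ℚ) = (k : ℚ) := by exact_mod_cast congrArg Nat.cast h3
    linarith
  -- split the full sum
  have hsplit : ∑ i, q i = ∑ i ∈ E, q i + ∑ i ∈ Eᶜ, q i :=
    (Finset.sum_add_sum_compl E q).symm
  rw [hsplit, ← key q, ← hcard]
  have : (∑ i ∈ E, ((a i : ℚ) - 1) * q i) + (∑ i ∈ E, q i + ∑ i ∈ E, q (i + 1))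
      = ∑ i ∈ E, ((a i : ℚ) * q i + q (i + 1)) := by
    rw [← Finset.sum_add_distrib, ← Finset.sum_add_distrib]
    exact Finset.sum_congr rfl fun i _ => by ring
  rw [this]
  simp [hq]
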